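/- Deterministic weighted regret summation bound: if for every t ∈ [T] one has 0 ≤ r_t ≤ 2 and r_t ≤ 2α σ̄_t ‖a_t/σ̄_t‖_{A_{t-1}^{-1}}, then ∑_{t=1}^T r_t ≤ 4d·log(1 + TL²/(dλ)) + 2α·√(2d·log(1 + TL²/(dλ))) · √(∑_{t=1}^T σ̄_t²). -/

import Mathlib

open Matrix Finset

/-- `√(vᵀ A v)`, the (semi-)norm of `v` induced by a positive definite matrix `A`. -/
noncomputable def matNorm {d : ℕ} (A : Matrix (Fin d) (Fin d) ℝ) (v : Fin d → ℝ) : ℝ :=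
  Real.sqrt (v ⬝ᵥ (A *ᵥ v))

/-- The weighted Gram matrix `A_t = λ I + ∑_{i=1}^t σ̄_i^{-2} a_i a_iᵀ`. -/
noncomputable def wGram {d : ℕ} (lam : ℝ) (a : ℕ → Fin d → ℝ) (sb : ℕ → ℝ) (t : ℕ) :
    Matrix (Fin d) (Fin d) ℝ :=
  lam • (1 : Matrix (Fin d) (Fin d) ℝ) +
    ∑ i ∈ Finset.Icc 1 t, ((sb i) ^ 2)⁻¹ • vecMulVec (a i) (a i)

namespace S5Aux

variable {d : ℕ}

lemma posSemidef_vecMulVec (v : Fin d → ℝ) : (vecMulVec v v).PosSemidef := by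
  have h := Matrix.posSemidef_conjTranspose_mul_self (Matrix.replicateRow Unit v)
  rwa [Matrix.conjTranspose_replicateRow, star_trivial, ← Matrix.vecMulVec_eq] at h

lemma vecMulVec_smul_smul (c : ℝ) (v : Fin d → ℝ) :
    vecMulVec (c • v) (c • v) = (c * c) • vecMulVec v v := by
  ext i j
  simp [Matrix.vecMulVec_apply]
  ring

lemma wGram_eq (lam : ℝ) (a : ℕ → Fin d → ℝ) (sb : ℕ → ℝ) (t : ℕ) :
    wGram lam a sb t = lam • (1 : Matrix (Fin d) (Fin d) ℝ) +
      ∑ i ∈ Finset.Icc 1 t, vecMulVec ((sb i)⁻¹ • a i) ((sb i)⁻¹ • a i) := by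
  unfold wGram
  congr 1
  refine Finset.sum_congr rfl fun i _ => ?_
  rw [vecMulVec_smul_smul]
  congr 1
  rw [pow_two, mul_inv]

lemma wGram_posDef {lam : ℝ} (hlam : 0 < lam) (a : ℕ → Fin d → ℝ) (sb : ℕ → ℝ) (t : ℕ) :
    (wGram lam a sb t).PosDef := by
  rw [wGram_eq]
  refine Matrix.PosDef.add_posSemidef ?_ ?_
  · rw [Matrix.smul_one_eq_diagonal]
    exact Matrix.PosDef.diagonal fun _ => hlam
  · exact Finset.sum_induction _ _ (fun A B hA hB => hA.add hB) Matrix.PosSemidef.zero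
      (fun i _ => posSemidef_vecMulVec _)

lemma min_le_two_log {u : ℝ} (hu : 0 ≤ u) : min 1 u ≤ 2 * Real.log (1 + u) := by
  have h1u : (0:ℝ) < 1 + u := by linarith
  have hlog : 1 - (1+u)⁻¹ ≤ Real.log (1+u) := Real.one_sub_inv_le_log_of_pos h1u
  have key : min 1 u * (1 + u) ≤ 2 * u := by
    rcases le_total u 1 with h | h
    · rw [min_eq_right h]; nlinarith
    · rw [min_eq_left h]; nlinarith
  have h2 : min 1 u ≤ 2 * u / (1 + u) := (le_div_iff₀ h1u).mpr key
  have h3 : 2 * u / (1 + u) = 2 * (1 - (1+u)⁻¹) := by field_simp; ring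
  linarith [h2.trans_eq h3]

lemma det_add_vecMulVec (A : Matrix (Fin d) (Fin d) ℝ) (hA : A.PosDef) (x : Fin d → ℝ) :
    (A + vecMulVec x x).det = A.det * (1 + x ⬝ᵥ (A⁻¹ *ᵥ x)) := by
  have h1 : (1 + replicateRow Unit x * A⁻¹ * replicateCol Unit x).det = 1 + x ⬝ᵥ (A⁻¹ *ᵥ x) := by
    rw [Matrix.mul_assoc, ← Matrix.replicateCol_mulVec, Matrix.det_unique, Matrix.add_apply,
      Matrix.one_apply_eq, Matrix.replicateRow_mul_replicateCol_apply]
  rw [Matrix.vecMulVec_eq Unit,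
    Matrix.det_add_replicateCol_mul_replicateRow (isUnit_iff_ne_zero.mpr hA.det_pos.ne') x x, h1]

lemma trace_eq_sum_eig (A : Matrix (Fin d) (Fin d) ℝ) (hA : A.IsHermitian) :
    A.trace = ∑ i, hA.eigenvalues i := by
  simpa using hA.trace_eq_sum_eigenvalues

lemma det_le_trace_div_pow (hd : 0 < d) (A : Matrix (Fin d) (Fin d) ℝ) (hA : A.PosDef) :
    A.det ≤ (A.trace / d) ^ d := by
  have hev : ∀ i, 0 < hA.isHermitian.eigenvalues i := hA.eigenvalues_pos
  have hdet : A.det = ∏ i, hA.isHermitian.eigenvalues i := by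
    simpa using hA.isHermitian.det_eq_prod_eigenvalues
  have hd0 : (d:ℝ) ≠ 0 := Nat.cast_ne_zero.mpr hd.ne'
  have hgm : ∏ i, hA.isHermitian.eigenvalues i ^ ((d:ℝ)⁻¹) ≤
      ∑ i : Fin d, (d:ℝ)⁻¹ * hA.isHermitian.eigenvalues i :=
    Real.geom_mean_le_arith_mean_weighted univ (fun _ => (d:ℝ)⁻¹) _
      (fun _ _ => by positivity)
      (by simp [Finset.card_univ]; field_simp)
      (fun i _ => (hev i).le)
  have hsum : (∑ i : Fin d, (d:ℝ)⁻¹ * hA.isHermitian.eigenvalues i) = A.trace / d := by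
    rw [trace_eq_sum_eig A hA.isHermitian, ← Finset.mul_sum, div_eq_inv_mul]
  have hrw : A.det = (∏ i, hA.isHermitian.eigenvalues i ^ ((d:ℝ)⁻¹)) ^ d := by
    rw [hdet, ← Finset.prod_pow]
    refine Finset.prod_congr rfl fun i _ => ?_
    rw [← Real.rpow_natCast (hA.isHermitian.eigenvalues i ^ ((d:ℝ)⁻¹)) d,
      ← Real.rpow_mul (hev i).le, inv_mul_cancel₀ hd0, Real.rpow_one]
  rw [hrw, ← hsum]
  exact pow_le_pow_left₀ (Finset.prod_nonneg fun i _ => Real.rpow_nonneg (hev i).le _) hgm d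

lemma det_wGram {lam : ℝ} (hlam : 0 < lam) (a : ℕ → Fin d → ℝ) (sb : ℕ → ℝ) (t : ℕ) :
    (wGram lam a sb t).det = lam ^ d *
      ∏ i ∈ Finset.Icc 1 t,
        (1 + ((sb i)⁻¹ • a i) ⬝ᵥ ((wGram lam a sb (i-1))⁻¹ *ᵥ ((sb i)⁻¹ • a i))) := by
  induction t with
  | zero =>
      have h0 : Finset.Icc 1 0 = (∅ : Finset ℕ) := by simp
      simp [wGram, h0, Matrix.det_smul]
  | succ k ih =>
      have hstep : wGram lam a sb (k+1) = wGram lam a sb k +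
          vecMulVec ((sb (k+1))⁻¹ • a (k+1)) ((sb (k+1))⁻¹ • a (k+1)) := by
        rw [wGram_eq, wGram_eq, Finset.sum_Icc_succ_top (Nat.succ_le_succ (Nat.zero_le k)),
          add_assoc]
      rw [hstep, det_add_vecMulVec _ (wGram_posDef hlam a sb k),
        Finset.prod_Icc_succ_top (Nat.succ_le_succ (Nat.zero_le k)), ih, Nat.add_sub_cancel,
        mul_assoc]

lemma trace_wGram (lam : ℝ) (a : ℕ → Fin d → ℝ) (sb : ℕ → ℝ) (t : ℕ) :
    (wGram lam a sb t).trace = lam * d +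
      ∑ i ∈ Finset.Icc 1 t, ((sb i)⁻¹ • a i) ⬝ᵥ ((sb i)⁻¹ • a i) := by
  rw [wGram_eq, Matrix.trace_add, Matrix.trace_smul, Matrix.trace_one, Matrix.trace_sum]
  simp only [Matrix.vecMulVec_eq Unit, Matrix.trace_replicateCol_mul_replicateRow, smul_eq_mul]
  simp

end S5Aux

open S5Aux in
/-- Deterministic weighted regret summation bound. -/
theorem statement5 {d : ℕ} (lam α L : ℝ) (hlam : 0 < lam) (hα : 0 ≤ α) (hL : 0 < L)
    (T : ℕ) (hT : 1 ≤ T) (a : ℕ → Fin d → ℝ) (sb : ℕ → ℝ) (r : ℕ → ℝ)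
    (hsb : ∀ t ∈ Finset.Icc 1 T, 0 < sb t)
    (haL : ∀ t ∈ Finset.Icc 1 T, Real.sqrt ((sb t)⁻¹ • a t ⬝ᵥ (sb t)⁻¹ • a t) ≤ L)
    (hr0 : ∀ t ∈ Finset.Icc 1 T, 0 ≤ r t)
    (hr2 : ∀ t ∈ Finset.Icc 1 T, r t ≤ 2)
    (hrb : ∀ t ∈ Finset.Icc 1 T,
      r t ≤ 2 * α * sb t * matNorm ((wGram lam a sb (t - 1))⁻¹) ((sb t)⁻¹ • a t)) :
    ∑ t ∈ Finset.Icc 1 T, r t ≤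
      4 * (d : ℝ) * Real.log (1 + (T : ℝ) * L ^ 2 / ((d : ℝ) * lam)) +
        2 * α * Real.sqrt (2 * (d : ℝ) * Real.log (1 + (T : ℝ) * L ^ 2 / ((d : ℝ) * lam))) *
          Real.sqrt (∑ t ∈ Finset.Icc 1 T, (sb t) ^ 2) := by
  classical
  by_cases hd : d = 0
  · subst hd
    have hrle : ∀ t ∈ Finset.Icc 1 T, r t ≤ 0 := by
      intro t ht
      have h := hrb t ht
      have hmn : matNorm ((wGram lam a sb (t - 1))⁻¹) ((sb t)⁻¹ • a t) = 0 := by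
        simp [matNorm, dotProduct]
      rw [hmn, mul_zero] at h
      exact h
    have h1 : ∑ t ∈ Finset.Icc 1 T, r t ≤ 0 := Finset.sum_nonpos hrle
    have h2 : (0:ℝ) ≤ Real.sqrt (∑ t ∈ Finset.Icc 1 T, (sb t) ^ 2) := Real.sqrt_nonneg _
    simpa using h1
  have hdpos : 0 < d := Nat.pos_of_ne_zero hd
  have hd0 : (d:ℝ) ≠ 0 := Nat.cast_ne_zero.mpr hd
  have hT0 : (0:ℝ) < T := by exact_mod_cast hT
  -- notation
  set u : ℕ → ℝ := fun t =>
    ((sb t)⁻¹ • a t) ⬝ᵥ ((wGram lam a sb (t-1))⁻¹ *ᵥ ((sb t)⁻¹ • a t)) with hu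
  set K : ℝ := (d:ℝ) * Real.log (1 + (T : ℝ) * L ^ 2 / ((d : ℝ) * lam)) with hK
  have hu0 : ∀ t, 0 ≤ u t := by
    intro t
    have h := ((wGram_posDef hlam a sb (t-1)).inv.posSemidef).dotProduct_mulVec_nonneg ((sb t)⁻¹ • a t)
    simpa [hu] using h
  -- Step A : sum of mins bounded by 2 K
  have hprodpos : ∀ i, (0:ℝ) < 1 + u i := fun i => by linarith [hu0 i]
  have hlogdet : Real.log ((wGram lam a sb T).det) =
      (d:ℝ) * Real.log lam + ∑ i ∈ Finset.Icc 1 T, Real.log (1 + u i) := by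
    rw [det_wGram hlam, Real.log_mul (pow_ne_zero _ hlam.ne')
      (Finset.prod_ne_zero_iff.mpr fun i _ => (hprodpos i).ne'), Real.log_pow,
      Real.log_prod fun i _ => (hprodpos i).ne']
  -- trace bound
  have hxle : ∀ i ∈ Finset.Icc 1 T, ((sb i)⁻¹ • a i) ⬝ᵥ ((sb i)⁻¹ • a i) ≤ L^2 := by
    intro i hi
    have h1 := haL i hi
    have h2 : (0:ℝ) ≤ ((sb i)⁻¹ • a i) ⬝ᵥ ((sb i)⁻¹ • a i) := by
      simpa using dotProduct_star_self_nonneg ((sb i)⁻¹ • a i)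
    calc ((sb i)⁻¹ • a i) ⬝ᵥ ((sb i)⁻¹ • a i)
        = (Real.sqrt (((sb i)⁻¹ • a i) ⬝ᵥ ((sb i)⁻¹ • a i)))^2 := (Real.sq_sqrt h2).symm
      _ ≤ L^2 := pow_le_pow_left₀ (Real.sqrt_nonneg _) h1 2
  have htrace : (wGram lam a sb T).trace ≤ lam * d + T * L^2 := by
    rw [trace_wGram]
    have : ∑ i ∈ Finset.Icc 1 T, ((sb i)⁻¹ • a i) ⬝ᵥ ((sb i)⁻¹ • a i) ≤
        ∑ i ∈ Finset.Icc 1 T, L^2 := Finset.sum_le_sum hxle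
    rw [Finset.sum_const, Nat.card_Icc] at this
    simp only [Nat.add_sub_cancel, nsmul_eq_mul] at this
    linarith
  have hB : (0:ℝ) < lam + T * L^2 / d := by positivity
  have hlogdet_le : Real.log ((wGram lam a sb T).det) ≤
      (d:ℝ) * Real.log (lam + T * L^2 / d) := by
    have h1 : (wGram lam a sb T).det ≤ ((wGram lam a sb T).trace / d)^d :=
      det_le_trace_div_pow hdpos _ (wGram_posDef hlam a sb T)
    have htrd : (wGram lam a sb T).trace / d ≤ lam + T * L^2 / d := by
      rw [div_le_iff₀ (Nat.cast_pos.mpr hdpos : (0:ℝ) < (d:ℝ))]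
      calc (wGram lam a sb T).trace ≤ lam * d + T * L^2 := htrace
        _ = (lam + T * L^2 / d) * d := by field_simp
    have htrnn : (0:ℝ) ≤ (wGram lam a sb T).trace / (d:ℝ) := by
      rw [trace_wGram]
      have hnn : 0 ≤ ∑ i ∈ Finset.Icc 1 T, ((sb i)⁻¹ • a i) ⬝ᵥ ((sb i)⁻¹ • a i) :=
        Finset.sum_nonneg fun i _ => by
          simpa using dotProduct_star_self_nonneg ((sb i)⁻¹ • a i)
      exact div_nonneg (add_nonneg (by positivity) hnn) (Nat.cast_nonneg d)
    have h2 : (wGram lam a sb T).det ≤ (lam + T * L^2 / d)^d :=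
      h1.trans (pow_le_pow_left₀ htrnn htrd d)
    calc Real.log ((wGram lam a sb T).det) ≤ Real.log ((lam + T * L^2 / d)^d) :=
          Real.log_le_log (wGram_posDef hlam a sb T).det_pos h2
      _ = (d:ℝ) * Real.log (lam + T * L^2 / d) := by rw [Real.log_pow]
  have hKeq : (d:ℝ) * Real.log (lam + T * L^2 / d) - (d:ℝ) * Real.log lam = K := by
    rw [hK, ← mul_sub, ← Real.log_div hB.ne' hlam.ne']
    congr 2
    field_simp
  have hsum_log : ∑ i ∈ Finset.Icc 1 T, Real.log (1 + u i) ≤ K := by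
    have := hlogdet_le
    rw [hlogdet] at this
    linarith [hKeq]
  have hminsum : ∑ i ∈ Finset.Icc 1 T, min 1 (u i) ≤ 2 * K := by
    calc ∑ i ∈ Finset.Icc 1 T, min 1 (u i)
        ≤ ∑ i ∈ Finset.Icc 1 T, 2 * Real.log (1 + u i) :=
          Finset.sum_le_sum fun i _ => min_le_two_log (hu0 i)
      _ = 2 * ∑ i ∈ Finset.Icc 1 T, Real.log (1 + u i) := by rw [Finset.mul_sum]
      _ ≤ 2 * K := by linarith
  have hK0 : 0 ≤ K := by
    apply mul_nonneg (Nat.cast_nonneg d)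
    apply Real.log_nonneg
    have : 0 ≤ (T:ℝ) * L^2 / ((d:ℝ) * lam) := by positivity
    linarith
  have hm0 : ∀ i, 0 ≤ min 1 (u i) := fun i => le_min zero_le_one (hu0 i)
  -- Step B : pointwise bound
  have hpt : ∀ t ∈ Finset.Icc 1 T,
      r t ≤ 2 * min 1 (u t) + 2 * α * sb t * Real.sqrt (min 1 (u t)) := by
    intro t ht
    rcases le_total 1 (u t) with h | h
    · rw [min_eq_left h]
      have : 0 ≤ 2 * α * sb t * Real.sqrt 1 := by
        apply mul_nonneg (mul_nonneg (by linarith) (hsb t ht).le) (Real.sqrt_nonneg _)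
      have h2 := hr2 t ht
      linarith
    · rw [min_eq_right h]
      have h1 := hrb t ht
      have heq : matNorm ((wGram lam a sb (t - 1))⁻¹) ((sb t)⁻¹ • a t) = Real.sqrt (u t) := rfl
      rw [heq] at h1
      linarith [hu0 t]
  -- Step C : Cauchy-Schwarz
  set S2 : ℝ := ∑ t ∈ Finset.Icc 1 T, sb t * Real.sqrt (min 1 (u t)) with hS2
  have hS2nonneg : 0 ≤ S2 :=
    Finset.sum_nonneg fun t ht => mul_nonneg (hsb t ht).le (Real.sqrt_nonneg _)
  have hcs : S2^2 ≤ (∑ t ∈ Finset.Icc 1 T, (sb t)^2) * (∑ t ∈ Finset.Icc 1 T, min 1 (u t)) := by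
    have := Finset.sum_mul_sq_le_sq_mul_sq (Finset.Icc 1 T) sb
      (fun t => Real.sqrt (min 1 (u t)))
    rw [hS2]
    have e : ∀ t, Real.sqrt (min 1 (u t)) ^ 2 = min 1 (u t) := fun t => Real.sq_sqrt (hm0 t)
    simp only [e] at this
    exact this
  have hsb2 : 0 ≤ ∑ t ∈ Finset.Icc 1 T, (sb t)^2 :=
    Finset.sum_nonneg fun t _ => sq_nonneg _
  have hS2le : S2 ≤ Real.sqrt (∑ t ∈ Finset.Icc 1 T, (sb t)^2) * Real.sqrt (2 * K) := by
    have h1 : S2 ≤ Real.sqrt ((∑ t ∈ Finset.Icc 1 T, (sb t)^2) *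
        (∑ t ∈ Finset.Icc 1 T, min 1 (u t))) := by
      rw [← Real.sqrt_sq hS2nonneg]
      exact Real.sqrt_le_sqrt hcs
    calc S2 ≤ Real.sqrt ((∑ t ∈ Finset.Icc 1 T, (sb t)^2) *
          (∑ t ∈ Finset.Icc 1 T, min 1 (u t))) := h1
      _ = Real.sqrt (∑ t ∈ Finset.Icc 1 T, (sb t)^2) *
          Real.sqrt (∑ t ∈ Finset.Icc 1 T, min 1 (u t)) := Real.sqrt_mul hsb2 _
      _ ≤ Real.sqrt (∑ t ∈ Finset.Icc 1 T, (sb t)^2) * Real.sqrt (2 * K) := by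
          apply mul_le_mul_of_nonneg_left (Real.sqrt_le_sqrt hminsum) (Real.sqrt_nonneg _)
  -- assemble
  have hfinal : ∑ t ∈ Finset.Icc 1 T, r t ≤
      2 * (∑ t ∈ Finset.Icc 1 T, min 1 (u t)) + 2 * α * S2 := by
    calc ∑ t ∈ Finset.Icc 1 T, r t
        ≤ ∑ t ∈ Finset.Icc 1 T, (2 * min 1 (u t) + 2 * α * sb t * Real.sqrt (min 1 (u t))) :=
          Finset.sum_le_sum hpt
      _ = 2 * (∑ t ∈ Finset.Icc 1 T, min 1 (u t)) + 2 * α * S2 := by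
          rw [Finset.sum_add_distrib, Finset.mul_sum, hS2, Finset.mul_sum]
          congr 1
          refine Finset.sum_congr rfl fun t _ => ?_
          ring
  have h2K : Real.sqrt (2 * (d:ℝ) * Real.log (1 + (T : ℝ) * L ^ 2 / ((d : ℝ) * lam))) =
      Real.sqrt (2 * K) := by rw [hK]; ring_nf
  rw [h2K]
  have hS2' : 2 * α * S2 ≤ 2 * α * (Real.sqrt (∑ t ∈ Finset.Icc 1 T, (sb t)^2) *
      Real.sqrt (2 * K)) :=
    mul_le_mul_of_nonneg_left hS2le (by linarith)
  calc ∑ t ∈ Finset.Icc 1 T, r t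
      ≤ 2 * (∑ t ∈ Finset.Icc 1 T, min 1 (u t)) + 2 * α * S2 := hfinal
    _ ≤ 2 * (2 * K) + 2 * α * (Real.sqrt (∑ t ∈ Finset.Icc 1 T, (sb t)^2) *
        Real.sqrt (2 * K)) := by
        have := mul_le_mul_of_nonneg_left hminsum (by norm_num : (0:ℝ) ≤ 2)
        linarith
    _ = 4 * K + 2 * α * Real.sqrt (2 * K) * Real.sqrt (∑ t ∈ Finset.Icc 1 T, (sb t)^2) := by
        ring
    _ = 4 * (d : ℝ) * Real.log (1 + (T : ℝ) * L ^ 2 / ((d : ℝ) * lam)) +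
        2 * α * Real.sqrt (2 * K) * Real.sqrt (∑ t ∈ Finset.Icc 1 T, (sb t) ^ 2) := by
        rw [hK]; ring
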